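/- arXiv:2103.16451 — 2 statements merged into one kernel-verified Lean document; each statement's English description precedes it below -/
import Mathlib

section
/- Let μ⁰, μ¹ be probability measures in the conditional ambiguity set B_{x₀,γ,ε}(𝔹) (defined below) where 𝔹 is a convex set of joint probability measures on 𝒳 × 𝒴. Then for any λ ∈ (0,1), the mixture λμ¹ + (1−λ)μ⁰ also belongs to B_{x₀,γ,ε}(𝔹). In other words, B_{x₀,γ,ε}(𝔹) is convex. -/
open MeasureTheory

/-- The conditional ambiguity set: probability measures `μ` on `Y` arising as the
conditional distribution of the second coordinate given that the first coordinate lies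
in `Nset`, under some joint probability measure `Q ∈ 𝔹` assigning mass at least `ε`
to the fiber `Nset × univ`. -/
def condSet {X Y : Type*} [MeasurableSpace X] [MeasurableSpace Y]
    (𝔹 : Set (Measure (X × Y))) (Nset : Set X) (ε : ℝ) : Set (Measure Y) :=
  {μ | IsProbabilityMeasure μ ∧ ∃ Q ∈ 𝔹, IsProbabilityMeasure Q ∧
    ε ≤ (Q (Nset ×ˢ Set.univ)).toReal ∧
    ∀ A : Set Y, MeasurableSet A →
      (Q (Nset ×ˢ A)).toReal = (μ A).toReal * (Q (Nset ×ˢ Set.univ)).toReal}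

lemma mix_toReal {Z : Type*} [MeasurableSpace Z] (ν0 ν1 : Measure Z)
    [IsProbabilityMeasure ν0] [IsProbabilityMeasure ν1]
    (t : ℝ) (ht0 : 0 ≤ t) (ht1 : t ≤ 1) (S : Set Z) :
    (((ENNReal.ofReal t • ν1 + ENNReal.ofReal (1 - t) • ν0)) S).toReal
      = t * (ν1 S).toReal + (1 - t) * (ν0 S).toReal := by
  have h1 : ENNReal.ofReal t * ν1 S ≠ ⊤ :=
    ENNReal.mul_ne_top ENNReal.ofReal_ne_top (measure_ne_top _ _)
  have h0 : ENNReal.ofReal (1 - t) * ν0 S ≠ ⊤ :=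
    ENNReal.mul_ne_top ENNReal.ofReal_ne_top (measure_ne_top _ _)
  simp [Measure.add_apply, Measure.smul_apply, smul_eq_mul,
    ENNReal.toReal_add h1 h0, ENNReal.toReal_mul,
    ENNReal.toReal_ofReal ht0, ENNReal.toReal_ofReal (by linarith : (0:ℝ) ≤ 1 - t)]

lemma mix_isProb {Z : Type*} [MeasurableSpace Z] (ν0 ν1 : Measure Z)
    [IsProbabilityMeasure ν0] [IsProbabilityMeasure ν1]
    (t : ℝ) (ht0 : 0 ≤ t) (ht1 : t ≤ 1) :
    IsProbabilityMeasure (ENNReal.ofReal t • ν1 + ENNReal.ofReal (1 - t) • ν0) := by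
  constructor
  simp [Measure.add_apply, Measure.smul_apply, smul_eq_mul]
  rw [← ENNReal.ofReal_add ht0 (by linarith : (0:ℝ) ≤ 1 - t)]
  norm_num

/-- Convexity of the conditional ambiguity set: if `𝔹` is convex, then so is
`condSet 𝔹 Nset ε`. -/
theorem stmt9 {X Y : Type*} [MeasurableSpace X] [MeasurableSpace Y]
    (𝔹 : Set (Measure (X × Y)))
    (hconv : ∀ Q0 ∈ 𝔹, ∀ Q1 ∈ 𝔹, ∀ t : ℝ, t ∈ Set.Icc (0:ℝ) 1 →
      (ENNReal.ofReal t • Q1 + ENNReal.ofReal (1 - t) • Q0) ∈ 𝔹)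
    (Nset : Set X) (hNset : MeasurableSet Nset) (ε : ℝ) (hε : 0 ≤ ε)
    (μ0 μ1 : Measure Y) (h0 : μ0 ∈ condSet 𝔹 Nset ε) (h1 : μ1 ∈ condSet 𝔹 Nset ε)
    (lam : ℝ) (hlam : lam ∈ Set.Ioo (0:ℝ) 1) :
    (ENNReal.ofReal lam • μ1 + ENNReal.ofReal (1 - lam) • μ0) ∈ condSet 𝔹 Nset ε := by
  obtain ⟨hp0, Q0, hQ0B, hQ0p, hε0, hcond0⟩ := h0
  obtain ⟨hp1, Q1, hQ1B, hQ1p, hε1, hcond1⟩ := h1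
  obtain ⟨hl0, hl1⟩ := hlam
  set a := (Q0 (Nset ×ˢ Set.univ)).toReal with ha
  set b := (Q1 (Nset ×ˢ Set.univ)).toReal with hb
  have ha0 : 0 ≤ a := ENNReal.toReal_nonneg
  have hb0 : 0 ≤ b := ENNReal.toReal_nonneg
  set d := lam * a + (1 - lam) * b with hd
  have hd0 : 0 ≤ d := by nlinarith
  set θ := lam * a / d with hθ
  have hθ0 : 0 ≤ θ := by
    apply div_nonneg (by nlinarith) hd0
  have hθ1 : θ ≤ 1 := by
    rcases eq_or_lt_of_le hd0 with h | h
    · simp [hθ, ← h]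
    · rw [hθ, div_le_one h]; nlinarith
  set m := θ * b + (1 - θ) * a with hm
  have hdcase : d = 0 ∨ 0 < d := by
    rcases eq_or_lt_of_le hd0 with h | h
    · exact Or.inl h.symm
    · exact Or.inr h
  have habd : d = 0 → a = 0 ∧ b = 0 := by
    intro h
    constructor <;> nlinarith
  have key1 : θ * b = lam * m := by
    rcases hdcase with h | h
    · obtain ⟨hA, hB⟩ := habd h
      simp [hm, hθ, hA, hB]
    · rw [hm, hθ]
      field_simp
      ring
  have key2 : (1 - θ) * a = (1 - lam) * m := by
    rcases hdcase with h | h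
    · obtain ⟨hA, hB⟩ := habd h
      simp [hm, hθ, hA, hB]
    · rw [hm, hθ]
      field_simp
      ring
  have hεm : ε ≤ m := by
    rcases hdcase with h | h
    · obtain ⟨hA, hB⟩ := habd h
      have : ε ≤ 0 := hA ▸ hε0
      simp [hm, hA, hB]; linarith
    · have hmval : m = a * b / d := by
        rw [hm, hθ]; field_simp; ring
      rw [hmval, le_div_iff₀ h]
      nlinarith [mul_le_mul_of_nonneg_right hε1 ha0, mul_le_mul_of_nonneg_right hε0 hb0]
  haveI := hp0; haveI := hp1; haveI := hQ0p; haveI := hQ1p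
  refine ⟨mix_isProb μ0 μ1 lam (le_of_lt hl0) (le_of_lt hl1), 
    ENNReal.ofReal θ • Q1 + ENNReal.ofReal (1 - θ) • Q0,
    hconv Q0 hQ0B Q1 hQ1B θ ⟨hθ0, hθ1⟩,
    mix_isProb Q0 Q1 θ hθ0 hθ1, ?_, ?_⟩
  · rw [mix_toReal Q0 Q1 θ hθ0 hθ1]
    exact le_trans hεm (le_of_eq (by rw [hm]))
  · intro A hA
    rw [mix_toReal Q0 Q1 θ hθ0 hθ1, mix_toReal Q0 Q1 θ hθ0 hθ1,
      mix_toReal μ0 μ1 lam (le_of_lt hl0) (le_of_lt hl1),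
      hcond0 A hA, hcond1 A hA]
    rw [hm] at key1 key2
    linear_combination (μ1 A).toReal * key1 + (μ0 A).toReal * key2
end

section
/- Let λᵢ > 0, α ∈ ℝᵐ, ŷᵢ ∈ ℝᵐ, β ∈ ℝ, η ≥ 0, sᵢ ∈ ℝ, and I the m×m identity. The semi-infinite constraint 'for all y ∈ ℝᵐ: (yᵀα − β)² − η·yᵀα − λᵢ‖y − ŷᵢ‖₂² ≤ sᵢ' holds if and only if the quadratic form constraint 'yᵀ(ααᵀ − λᵢI)y + (2λᵢŷᵢ − (2β+η)α)ᵀy + β² − λᵢ‖ŷᵢ‖₂² − sᵢ ≤ 0 for all y ∈ ℝᵐ' holds, which in turn (for a quadratic function) is equivalent to the matrix condition that the (m+1)×(m+1) symmetric matrix [[λᵢI − ααᵀ, (β + η/2)α − λᵢŷᵢ], [((β + η/2)α − λᵢŷᵢ)ᵀ, sᵢ + λᵢ‖ŷᵢ‖₂² − β²]] is positive semi-definite. -/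
lemma lemA14 (q b c : ℝ) (h : ∀ r : ℝ, r^2*q + r*b + c ≤ 0) : q ≤ 0 := by
  by_contra hq
  push_neg at hq
  set r := Real.sqrt ((|c|+1)/q) with hr
  have hsq : r^2 = (|c|+1)/q := Real.sq_sqrt (by positivity)
  have hmul : (|c|+1)/q * q = |c|+1 := div_mul_cancel₀ _ (ne_of_gt hq)
  have h1 := h r
  have h2 := h (-r)
  nlinarith [neg_abs_le c, abs_nonneg c]

lemma scale_sum14 {m : ℕ} (y f : Fin m → ℝ) (r : ℝ) :
    ∑ i, (r * y i) * f i = r * ∑ i, y i * f i := by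
  rw [Finset.mul_sum]; exact Finset.sum_congr rfl fun i _ => by ring

lemma scale_sq14 {m : ℕ} (y : Fin m → ℝ) (r : ℝ) :
    ∑ i, (r * y i)^2 = r^2 * ∑ i, (y i)^2 := by
  rw [Finset.mul_sum]; exact Finset.sum_congr rfl fun i _ => by ring

lemma lin_scale14 {m : ℕ} (y f : Fin m → ℝ) (r : ℝ) :
    ∑ i, f i * (r * y i) = r * ∑ i, f i * y i := by
  rw [Finset.mul_sum]; exact Finset.sum_congr rfl fun i _ => by ring

lemma quad_sum14 {m : ℕ} (α y : Fin m → ℝ) (lam : ℝ) :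
    (∑ i, ∑ j, y i * ((α i * α j) - lam * (if i = j then (1:ℝ) else 0)) * y j)
      = (∑ i, y i * α i)^2 - lam * ∑ i, (y i)^2 := by
  rw [sq, Finset.sum_mul_sum, Finset.mul_sum]
  rw [← Finset.sum_sub_distrib]
  apply Finset.sum_congr rfl; intro i _
  have : lam * y i ^2 = ∑ j, (if i = j then lam * y i ^ 2 else 0) := by
    rw [Finset.sum_ite_eq]; simp
  rw [this, ← Finset.sum_sub_distrib]
  apply Finset.sum_congr rfl; intro j _
  by_cases h : i = j <;> simp [h] <;> ring

lemma quad_sum14' {m : ℕ} (α y : Fin m → ℝ) (lam : ℝ) :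
    (∑ i, ∑ j, y i * ((lam * if i = j then (1:ℝ) else 0) - α i * α j) * y j)
      = lam * (∑ i, (y i)^2) - (∑ i, y i * α i)^2 := by
  have := quad_sum14 α y lam
  have e : ∀ i j : Fin m, y i * ((lam * if i = j then (1:ℝ) else 0) - α i * α j) * y j
      = -(y i * ((α i * α j) - lam * (if i = j then (1:ℝ) else 0)) * y j) := by
    intro i j; ring
  simp only [e, Finset.sum_neg_distrib] at *
  linarith

lemma form_eval14 {m : ℕ} (lam : ℝ) (α yh : Fin m → ℝ) (β η s : ℝ)
    (x : (Fin m ⊕ Fin 1) → ℝ) :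
    dotProduct (star x) ((Matrix.fromBlocks
        (lam • (1 : Matrix (Fin m) (Fin m) ℝ) - Matrix.vecMulVec α α)
        (Matrix.of fun i (_ : Fin 1) => (β + η / 2) * α i - lam * yh i)
        (Matrix.of fun (_ : Fin 1) j => (β + η / 2) * α j - lam * yh j)
        (Matrix.of fun (_ : Fin 1) (_ : Fin 1) =>
          s + lam * (∑ i, (yh i) ^ 2) - β ^ 2)).mulVec x) =
      lam * (∑ i, (x (Sum.inl i))^2) - (∑ i, x (Sum.inl i) * α i)^2
      + 2 * x (Sum.inr 0) * (∑ i, ((β + η/2) * α i - lam * yh i) * x (Sum.inl i))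
      + (x (Sum.inr 0))^2 * (s + lam * (∑ i, (yh i)^2) - β^2) := by
  simp only [dotProduct, Matrix.mulVec, star_trivial, Fintype.sum_sum_type,
    Fin.sum_univ_one, Matrix.fromBlocks_apply₁₁, Matrix.fromBlocks_apply₁₂,
    Matrix.fromBlocks_apply₂₁, Matrix.fromBlocks_apply₂₂, Matrix.of_apply,
    Matrix.sub_apply, Matrix.smul_apply, Matrix.one_apply, Matrix.vecMulVec_apply,
    smul_eq_mul, Pi.star_apply, dotProduct]
  have h1 : ∑ i, x (Sum.inl i) * (∑ j, ((lam * if i = j then (1:ℝ) else 0) - α i * α j) * x (Sum.inl j)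
        + ((β + η / 2) * α i - lam * yh i) * x (Sum.inr 0))
      = (∑ i, ∑ j, x (Sum.inl i) * ((lam * if i = j then (1:ℝ) else 0) - α i * α j) * x (Sum.inl j))
        + x (Sum.inr 0) * ∑ i, ((β + η / 2) * α i - lam * yh i) * x (Sum.inl i) := by
    rw [Finset.mul_sum, ← Finset.sum_add_distrib]
    apply Finset.sum_congr rfl; intro i _
    rw [mul_add, Finset.mul_sum]
    congr 1
    · apply Finset.sum_congr rfl; intro j _; ring
    · ring
  rw [h1, quad_sum14']
  ring

lemma herm14 {m : ℕ} (lam : ℝ) (α yh : Fin m → ℝ) (β η s : ℝ) :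
    (Matrix.fromBlocks
        (lam • (1 : Matrix (Fin m) (Fin m) ℝ) - Matrix.vecMulVec α α)
        (Matrix.of fun i (_ : Fin 1) => (β + η / 2) * α i - lam * yh i)
        (Matrix.of fun (_ : Fin 1) j => (β + η / 2) * α j - lam * yh j)
        (Matrix.of fun (_ : Fin 1) (_ : Fin 1) =>
          s + lam * (∑ i, (yh i) ^ 2) - β ^ 2)).IsHermitian := by
  rw [Matrix.IsHermitian]
  ext i j
  rcases i with i | i <;> rcases j with j | j <;>
    simp [Matrix.conjTranspose_apply, Matrix.vecMulVec_apply, Matrix.one_apply,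
      Matrix.sub_apply, Matrix.smul_apply]
  by_cases h : i = j
  · simp [h, mul_comm]
  · simp [h, mul_comm]
    intro hji; exact absurd hji.symm h

/-- The semi-infinite mean-variance constraint is equivalent to a quadratic form
being nonpositive everywhere, which in turn is equivalent to positive
semi-definiteness of the associated `(m+1)×(m+1)` block matrix. -/
theorem stmt14 {m : ℕ} (lam : ℝ) (hlam : 0 < lam) (α yh : Fin m → ℝ)
    (β η s : ℝ) (hη : 0 ≤ η) :
    ((∀ y : Fin m → ℝ,
        ((∑ i, y i * α i) - β) ^ 2 - η * (∑ i, y i * α i)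
          - lam * (∑ i, (y i - yh i) ^ 2) ≤ s) ↔
      (∀ y : Fin m → ℝ,
        (∑ i, ∑ j, y i * ((α i * α j) - lam * (if i = j then (1:ℝ) else 0)) * y j)
          + (∑ i, (2 * lam * yh i - (2 * β + η) * α i) * y i)
          + β ^ 2 - lam * (∑ i, (yh i) ^ 2) - s ≤ 0)) ∧
    ((∀ y : Fin m → ℝ,
        (∑ i, ∑ j, y i * ((α i * α j) - lam * (if i = j then (1:ℝ) else 0)) * y j)
          + (∑ i, (2 * lam * yh i - (2 * β + η) * α i) * y i)
          + β ^ 2 - lam * (∑ i, (yh i) ^ 2) - s ≤ 0) ↔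
      (Matrix.fromBlocks
        (lam • (1 : Matrix (Fin m) (Fin m) ℝ) - Matrix.vecMulVec α α)
        (Matrix.of fun i (_ : Fin 1) => (β + η / 2) * α i - lam * yh i)
        (Matrix.of fun (_ : Fin 1) j => (β + η / 2) * α j - lam * yh j)
        (Matrix.of fun (_ : Fin 1) (_ : Fin 1) =>
          s + lam * (∑ i, (yh i) ^ 2) - β ^ 2)).PosSemidef) := by
  -- common rewriting facts
  have e2 : ∀ y : Fin m → ℝ, ∑ i, (y i - yh i)^2
      = (∑ i, (y i)^2) - 2*(∑ i, yh i * y i) + (∑ i, (yh i)^2) := by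
    intro y
    have : ∀ i, (y i - yh i)^2 = (y i)^2 - 2*(yh i * y i) + (yh i)^2 := fun i => by ring
    simp only [this, Finset.sum_add_distrib, Finset.sum_sub_distrib, Finset.mul_sum]
  have e3 : ∀ y : Fin m → ℝ, ∑ i, (2 * lam * yh i - (2 * β + η) * α i) * y i
      = 2*lam*(∑ i, yh i * y i) - (2*β+η)*(∑ i, y i * α i) := by
    intro y
    rw [Finset.mul_sum, Finset.mul_sum, ← Finset.sum_sub_distrib]
    exact Finset.sum_congr rfl fun i _ => by ring
  have eB : ∀ y : Fin m → ℝ, ∑ i, (2 * lam * yh i - (2 * β + η) * α i) * y i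
      = -2 * ∑ i, ((β + η/2) * α i - lam * yh i) * y i := by
    intro y
    rw [Finset.mul_sum]
    exact Finset.sum_congr rfl fun i _ => by ring
  constructor
  · constructor
    · intro h y
      have hy := h y
      rw [e2] at hy
      rw [quad_sum14, e3]
      nlinarith [hy]
    · intro h y
      have hy := h y
      rw [quad_sum14, e3] at hy
      rw [e2]
      nlinarith [hy]
  · -- the key reformulated hypothesis
    constructor
    · intro h
      have h' : ∀ y : Fin m → ℝ,
          (∑ i, y i * α i)^2 - lam*(∑ i, (y i)^2)
            - 2*(∑ i, ((β + η/2) * α i - lam * yh i) * y i)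
            + (β^2 - lam*(∑ i, (yh i)^2) - s) ≤ 0 := by
        intro y
        have hy := h y
        rw [quad_sum14, eB] at hy
        linarith
      refine Matrix.posSemidef_iff_dotProduct_mulVec.mpr ⟨herm14 lam α yh β η s, fun x => ?_⟩
      rw [form_eval14]
      set A := ∑ i, x (Sum.inl i) * α i with hA
      set Y := ∑ i, (x (Sum.inl i))^2 with hY
      set B := ∑ i, ((β + η/2) * α i - lam * yh i) * x (Sum.inl i) with hB
      set t := x (Sum.inr 0) with ht
      have key : A^2 - lam*Y - 2*t*B + t^2*(β^2 - lam*(∑ i, (yh i)^2) - s) ≤ 0 := by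
        by_cases h0 : t = 0
        · have hq : A^2 - lam*Y ≤ 0 := by
            apply lemA14 _ (-2*B) (β^2 - lam*(∑ i, (yh i)^2) - s)
            intro r
            have := h' (fun i => r * x (Sum.inl i))
            simp only [scale_sum14, scale_sq14, lin_scale14] at this
            rw [← hA, ← hY, ← hB] at this
            nlinarith [this]
          rw [h0]; ring_nf; nlinarith [hq]
        · have := h' (fun i => (1/t) * x (Sum.inl i))
          simp only [scale_sum14, scale_sq14, lin_scale14] at this
          rw [← hA, ← hY, ← hB] at this
          have ht2 : 0 < t^2 := by positivity
          have hprod : (((1/t)*A)^2 - lam*((1/t)^2*Y) - 2*((1/t)*B)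
              + (β^2 - lam*(∑ i, (yh i)^2) - s)) * t^2
              = A^2 - lam*Y - 2*t*B + t^2*(β^2 - lam*(∑ i, (yh i)^2) - s) := by
            field_simp
          nlinarith [mul_nonpos_of_nonpos_of_nonneg this (le_of_lt ht2), hprod]
      linarith [key]
    · intro hpsd y
      have h1 := hpsd.dotProduct_mulVec_nonneg (Sum.elim y (fun _ => (1:ℝ)))
      rw [form_eval14] at h1
      simp only [Sum.elim_inl, Sum.elim_inr] at h1
      rw [quad_sum14, eB]
      nlinarith [h1]
end
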